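/- For every n ≥ 3 there exists a residue class modulo F_{2n} that cannot be written as a sum of n-2 elements of the set A = {0} ∪ {F_{2k-1} : 1 ≤ k ≤ n} ⊆ ℤ/F_{2n}ℤ. -/

import Mathlib

lemma fib_count_key : ∀ n : ℕ, 1 ≤ n → ∀ c : ℕ → ℤ, (∀ k, 0 ≤ c k) → ∀ a b : ℤ, 1 ≤ a →
    (∑ k ∈ Finset.range n, c k * (Nat.fib (2*k + 1) : ℤ))
      = a * (Nat.fib (2*n) : ℤ) + b * (Nat.fib (2*n - 1) : ℤ) →
    (n : ℤ) + a - 1 + b ≤ ∑ k ∈ Finset.range n, c k := by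
  intro n hn
  induction n, hn using Nat.le_induction with
  | base =>
    intro c hc a b ha heq
    rw [Finset.sum_range_one] at heq ⊢
    norm_num [Nat.fib_one, Nat.fib_two] at heq
    push_cast
    linarith
  | succ n hn ih =>
    intro c hc a b ha heq
    rw [Finset.sum_range_succ] at heq
    obtain ⟨m, hm⟩ : ∃ m, 2*n = m + 1 := ⟨2*n-1, by omega⟩
    have i1 : 2*(n+1) = m+3 := by omega
    have i2 : 2*(n+1)-1 = m+2 := by omega
    have i3 : 2*n-1 = m := by omega
    rw [i2, i1, show 2*n+1 = m+2 by omega] at heq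
    have e3 : (Nat.fib (m+3) : ℤ) = 2 * (Nat.fib (m+1) : ℤ) + (Nat.fib m : ℤ) := by
      rw [show m+3 = (m+1)+2 by ring, Nat.fib_add_two, Nat.fib_add_two]
      push_cast; ring
    have e2 : (Nat.fib (m+2) : ℤ) = (Nat.fib (m+1) : ℤ) + (Nat.fib m : ℤ) := by
      rw [Nat.fib_add_two]; push_cast; ring
    have hnn : 0 ≤ ∑ k ∈ Finset.range n, c k * (Nat.fib (2*k+1) : ℤ) :=
      Finset.sum_nonneg fun k _ => mul_nonneg (hc k) (by positivity)
    have hfj1 : (1 : ℤ) ≤ (Nat.fib (m+1) : ℤ) := by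
      exact_mod_cast Nat.fib_pos.mpr (show 0 < m+1 by omega)
    have hfj0 : (1 : ℤ) ≤ (Nat.fib m : ℤ) := by
      exact_mod_cast Nat.fib_pos.mpr (show 0 < m by omega)
    set C := c n with hC
    have heq' : (∑ k ∈ Finset.range n, c k * (Nat.fib (2*k+1) : ℤ))
        = (2*a + b - C) * (Nat.fib (2*n) : ℤ) + (a + b - C) * (Nat.fib (2*n-1) : ℤ) := by
      rw [i3, hm]
      rw [e3, e2] at heq
      linear_combination heq
    have ha' : 1 ≤ 2*a + b - C := by
      by_contra h
      push_neg at h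
      have h1 : 2*a + b - C ≤ 0 := by linarith
      have h2 : a + b - C ≤ -1 := by linarith
      have hq := heq'
      rw [i3, hm] at hq
      nlinarith [mul_nonpos_of_nonpos_of_nonneg h1 (by linarith : (0:ℤ) ≤ (Nat.fib (m+1) : ℤ)),
        mul_le_mul_of_nonneg_right h2 (by linarith : (0:ℤ) ≤ (Nat.fib m : ℤ)), hq, hnn]
    have hIH := ih c hc (2*a+b-C) (a+b-C) ha' heq'
    rw [Finset.sum_range_succ]
    have hCnn : 0 ≤ C := hc n
    push_cast
    push_cast at hIH
    linarith

theorem fan_sumset_not_covers (n : ℕ) (hn : 3 ≤ n) :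
    ∃ x : ZMod (Nat.fib (2 * n)),
      ¬ ∃ f : Fin (n - 2) → ZMod (Nat.fib (2 * n)),
        (∀ i, f i = 0 ∨ ∃ k, 1 ≤ k ∧ k ≤ n ∧ f i = (Nat.fib (2 * k - 1) : ZMod (Nat.fib (2 * n)))) ∧
        ∑ i, f i = x := by
  haveI : NeZero (Nat.fib (2 * n)) := ⟨(Nat.fib_pos.mpr (by omega)).ne'⟩
  refine ⟨-1, ?_⟩
  rintro ⟨f, hf, hsum⟩
  have hK : ∀ i, ∃ k, k ≤ n ∧ f i = (Nat.fib (2 * k - 1) : ZMod (Nat.fib (2 * n))) := by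
    intro i
    rcases hf i with h | ⟨k, h1, h2, h3⟩
    · exact ⟨0, Nat.zero_le n, by simpa using h⟩
    · exact ⟨k, h2, h3⟩
  choose K hKle hKval using hK
  set T : ℕ := ∑ i, Nat.fib (2 * K i - 1) with hT
  have hcast : ((T : ZMod (Nat.fib (2 * n)))) = -1 := by
    rw [hT]
    push_cast
    rw [← hsum]
    exact Finset.sum_congr rfl fun i _ => (hKval i).symm
  have hdvd : Nat.fib (2 * n) ∣ T + 1 := by
    have h0 : ((T + 1 : ℕ) : ZMod (Nat.fib (2 * n))) = 0 := by push_cast [hcast]; ring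
    exact (ZMod.natCast_eq_zero_iff _ _).mp h0
  obtain ⟨s, hs⟩ := hdvd
  have hs1 : 1 ≤ s := by
    rcases Nat.eq_zero_or_pos s with h | h
    · subst h; simp at hs
    · exact h
  set c : ℕ → ℤ := fun k =>
    (if k = 0 then 1 else 0) + ∑ i : Fin (n-2), (if K i = k + 1 then 1 else 0) with hc
  have hcnn : ∀ k, 0 ≤ c k := by
    intro k
    apply add_nonneg
    · positivity
    · exact Finset.sum_nonneg fun i _ => by positivity
  have hinner : ∀ i : Fin (n-2),
      (∑ k ∈ Finset.range n, (if K i = k + 1 then (Nat.fib (2*k+1) : ℤ) else 0))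
        = (Nat.fib (2 * K i - 1) : ℤ) := by
    intro i
    rcases Nat.eq_zero_or_pos (K i) with h0 | hpos
    · rw [h0]
      norm_num
    · obtain ⟨m, hm⟩ : ∃ m, K i = m + 1 := ⟨K i - 1, by omega⟩
      have hmn : m ∈ Finset.range n := Finset.mem_range.mpr (by have := hKle i; omega)
      rw [hm]
      have hco : ∀ k ∈ Finset.range n, (if m + 1 = k + 1 then (Nat.fib (2*k+1) : ℤ) else 0)
          = (if m = k then (Nat.fib (2*k+1) : ℤ) else 0) := by
        intro k _; simp
      rw [Finset.sum_congr rfl hco, Finset.sum_ite_eq, if_pos hmn,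
        show 2*(m+1)-1 = 2*m+1 by omega]
  have hinner1 : ∀ i : Fin (n-2),
      (∑ k ∈ Finset.range n, (if K i = k + 1 then (1:ℤ) else 0)) ≤ 1 := by
    intro i
    rcases Nat.eq_zero_or_pos (K i) with h0 | hpos
    · rw [h0]; norm_num
    · obtain ⟨m, hm⟩ : ∃ m, K i = m + 1 := ⟨K i - 1, by omega⟩
      rw [hm]
      have hco : ∀ k ∈ Finset.range n, (if m + 1 = k + 1 then (1:ℤ) else 0)
          = (if m = k then (1:ℤ) else 0) := by intro k _; simp
      rw [Finset.sum_congr rfl hco, Finset.sum_ite_eq]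
      split <;> norm_num
  have lhs2gen : ∀ g : ℕ → ℤ, (∑ k ∈ Finset.range n, (if k = 0 then (1:ℤ) else 0) * g k) = g 0 := by
    intro g
    have hco : ∀ k ∈ Finset.range n, (if k = 0 then (1:ℤ) else 0) * g k
        = (if 0 = k then g k else 0) := by
      intro k _
      rcases eq_or_ne k 0 with rfl | h
      · simp
      · simp [h, Ne.symm h]
    rw [Finset.sum_congr rfl hco, Finset.sum_ite_eq]
    simp [Finset.mem_range, show 0 < n by omega]
  have hsInt : (T : ℤ) + 1 = (s : ℤ) * (Nat.fib (2*n) : ℤ) := by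
    have := congrArg (Nat.cast : ℕ → ℤ) hs
    push_cast at this
    linarith
  have hsumeq : (∑ k ∈ Finset.range n, c k * (Nat.fib (2*k + 1) : ℤ))
      = (s : ℤ) * (Nat.fib (2*n) : ℤ) + 0 * (Nat.fib (2*n - 1) : ℤ) := by
    have lhs1 : (∑ k ∈ Finset.range n, c k * (Nat.fib (2*k + 1) : ℤ))
        = (∑ k ∈ Finset.range n, (if k = 0 then (1:ℤ) else 0) * (Nat.fib (2*k+1) : ℤ))
          + ∑ k ∈ Finset.range n, ∑ i : Fin (n-2),
              (if K i = k + 1 then (Nat.fib (2*k+1) : ℤ) else 0) := by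
      rw [← Finset.sum_add_distrib]
      refine Finset.sum_congr rfl fun k _ => ?_
      simp only [hc, add_mul, Finset.sum_mul, ite_mul, one_mul, zero_mul]
    have lhs2 := lhs2gen (fun k => (Nat.fib (2*k+1) : ℤ))
    have lhs3 : (∑ k ∈ Finset.range n, ∑ i : Fin (n-2),
          (if K i = k + 1 then (Nat.fib (2*k+1) : ℤ) else 0)) = (T : ℤ) := by
      rw [Finset.sum_comm, hT]
      push_cast
      exact Finset.sum_congr rfl fun i _ => hinner i
    rw [lhs1, lhs3]
    rw [lhs2]
    norm_num [Nat.fib_one]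
    linarith
  have hcount : (∑ k ∈ Finset.range n, c k) ≤ (n : ℤ) - 1 := by
    have l1 : (∑ k ∈ Finset.range n, c k)
        = (∑ k ∈ Finset.range n, (if k = 0 then (1:ℤ) else 0))
          + ∑ k ∈ Finset.range n, ∑ i : Fin (n-2), (if K i = k + 1 then (1:ℤ) else 0) := by
      rw [← Finset.sum_add_distrib]
    have l2 : (∑ k ∈ Finset.range n, (if k = 0 then (1:ℤ) else 0)) = 1 := by
      have := lhs2gen (fun _ => (1:ℤ))
      simpa using this
    have l3 : (∑ k ∈ Finset.range n, ∑ i : Fin (n-2), (if K i = k + 1 then (1:ℤ) else 0))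
        ≤ (n : ℤ) - 2 := by
      rw [Finset.sum_comm]
      calc (∑ i : Fin (n-2), ∑ k ∈ Finset.range n, (if K i = k + 1 then (1:ℤ) else 0))
          ≤ ∑ i : Fin (n-2), (1:ℤ) := Finset.sum_le_sum fun i _ => hinner1 i
        _ ≤ ((n : ℤ) - 2) := by
            simp only [Finset.sum_const, Finset.card_univ, Fintype.card_fin,
              nsmul_eq_mul, mul_one]
            omega

    linarith [l1, l2, l3]
  have hfinal := fib_count_key n (by omega) c hcnn (s : ℤ) 0
    (by exact_mod_cast hs1) hsumeq
  have hs1' : (1 : ℤ) ≤ (s : ℤ) := by exact_mod_cast hs1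
  linarith
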